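/- For any a ∈ (−∞,s), let b = 𝔱(a) ∈ (−∞,s). Then B′(b) − B′₋(b) ≤ 0 and B′₊(b) − B′(b) ≥ 0, where B′₋(b), B′₊(b) denote the one-sided limits of B′ at b taken within (−∞,s]; in particular B′(b) = min{B′(b), B′₋(b), B′₊(b)}. Moreover, for b = s = 𝔱(−∞), B′(s) − B′₋(s) ≤ 0. -/

import Mathlib

/-!
Islands (Section 3.3 of the paper).  `R` is a useful function with `max R(x) = R(x)` for all
`x`, `s ∈ ℝ`, and `R(-∞) = Rinf` is a fixed value with `R(z) ≤ Rinf` for all `z < s`.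
A (red) island in `K = [-∞, s)` is an open interval `(x, y) ⊆ K` (with `x = -∞` allowed,
encoded by `⊥ : EReal`) as in the definition below.  Lemma 3.4 of the paper:  `z ∈ (-∞, s)`
lies in the interior of an island iff `R(z) < R(y)` for some `y ∈ (z, s)`.
-/

noncomputable section

open Filter Topology

/-- `Δx⁻`, the indicator function of `[x, ∞)`. -/
def deltaMinus (x : ℝ) : ℝ → ℝ := Set.indicator (Set.Ici x) 1

/-- `Δx⁺`, the indicator function of `(x, ∞)`. -/
def deltaPlus (x : ℝ) : ℝ → ℝ := Set.indicator (Set.Ioi x) 1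

/-- `F` is a useful function, with decomposition data `f` (continuous of bounded variation)
and coefficient families `um = (u_x⁻)`, `up = (u_x⁺)`. -/
structure IsUseful (F f um up : ℝ → ℝ) : Prop where
  cont : Continuous f
  bddVar : BoundedVariationOn f Set.univ
  summable_um : Summable fun x : ℝ => |um x|
  summable_up : Summable fun x : ℝ => |up x|
  decomp : ∀ t : ℝ,
    F t = f t + (∑' x : ℝ, um x * deltaMinus x t) + (∑' x : ℝ, up x * deltaPlus x t)

/-- `max R (x) = R x` for every `x`, i.e. both one-sided limits are `≤ R x`. -/
def MaxEqSelf (R : ℝ → ℝ) : Prop :=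
  ∀ a : ℝ, Function.leftLim R a ≤ R a ∧ Function.rightLim R a ≤ R a

/-- The value of `R` at a point of `[-∞, ∞)`, where `R(-∞) = Rinf`. -/
def Rval (R : ℝ → ℝ) (Rinf : ℝ) (x : EReal) : ℝ :=
  if x = ⊥ then Rinf else R x.toReal

/-- `(x, y)` is a (red) island in `K = [-∞, s)`:  either
(i) `y = s`, `R(x) ≥ R₋(s)` and `R(z) < R₋(s)` for all `z ∈ (x, s)`; or
(ii) `y < s`, `R(x) ≥ R(y) ≥ R₋(s)`, `R(z) < R(y)` for all `z ∈ (x, y)`, and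
`R(w) ≤ R(y)` for all `w ∈ (y, s)`. -/
def IsIsland (R : ℝ → ℝ) (Rinf s : ℝ) (x y : EReal) : Prop :=
  x < y ∧
  ((y = (s : EReal) ∧ Function.leftLim R s ≤ Rval R Rinf x ∧
      ∀ z : ℝ, x < (z : EReal) → z < s → R z < Function.leftLim R s) ∨
   (∃ yr : ℝ, y = (yr : EReal) ∧ yr < s ∧
      R yr ≤ Rval R Rinf x ∧ Function.leftLim R s ≤ R yr ∧
      (∀ z : ℝ, x < (z : EReal) → (z : EReal) < y → R z < R yr) ∧
      (∀ w : ℝ, yr < w → w < s → R w ≤ R yr)))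


/-- The function `H : [-∞, s) → ℝ` flattening the islands of `R`:
`H(z) = R(y)` if `z ∈ (x, y]` for an island `(x, y)` with `y < s`; `H(z) = R₋(s)` if
`z ∈ (x, s)` for an island `(x, s)`; and `H(z) = R(z)` otherwise. -/
noncomputable def Hfun (R : ℝ → ℝ) (Rinf s : ℝ) (z : EReal) : ℝ := by
  classical
  exact
    if h : ∃ x y : EReal, IsIsland R Rinf s x y ∧ x < z ∧ z ≤ y ∧ y < (s : EReal) then
      R (h.choose_spec.choose).toReal
    else if ∃ x : EReal, IsIsland R Rinf s x (s : EReal) ∧ x < z ∧ z < (s : EReal) then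
      Function.leftLim R s
    else Rval R Rinf z

/-- The order-reversing map `𝔱(x) = tan(arctan s - arctan x - π/2)` interchanging
`K = [-∞, s)` and `K* = (-∞, s]`. -/
noncomputable def tmap (s x : ℝ) : ℝ :=
  Real.tan (Real.arctan s - Real.arctan x - Real.pi / 2)

/-- The extension of `𝔱` to `EReal`, with `𝔱(-∞) = s` and `𝔱(s) = -∞`. -/
noncomputable def tE (s : ℝ) (x : EReal) : EReal :=
  if x = ⊥ then ((s : ℝ) : EReal)
  else if x = ((s : ℝ) : EReal) then ⊥
  else ((tmap s x.toReal : ℝ) : EReal)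

/-- `H₊(z) = lim_{w → z⁺} H(w)` for `z ∈ [-∞, s)` (at `z = -∞` this is the limit of `H`
along `atBot`). -/
noncomputable def HplusE (R : ℝ → ℝ) (Rinf s : ℝ) (z : EReal) : ℝ :=
  if z = ⊥ then limUnder Filter.atBot (fun w : ℝ => Hfun R Rinf s (w : EReal))
  else Function.rightLim (fun w : ℝ => Hfun R Rinf s (w : EReal)) z.toReal

/-- `R̃ = H + H₊ - R` on `[-∞, s)` (the islands of `R` flipped up). -/
noncomputable def RtildeE (R : ℝ → ℝ) (Rinf s : ℝ) (z : EReal) : ℝ :=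
  Hfun R Rinf s z + HplusE R Rinf s z - Rval R Rinf z

/-- The new blue function `B'(z) = R̃(𝔱(z))` on `K* = (-∞, s]`. -/
noncomputable def Bprime (R : ℝ → ℝ) (Rinf s : ℝ) (z : ℝ) : ℝ :=
  RtildeE R Rinf s (tE s (z : EReal))

section Regulated

open Function Set

lemma tendsto_of_eventually_const {α : Type*} {F : Filter α} {g : α → ℝ} {c : ℝ}
    (h : ∀ᶠ t in F, g t = c) : Filter.Tendsto g F (𝓝 c) :=
  Filter.Tendsto.congr' (by filter_upwards [h] with t ht; exact ht.symm) tendsto_const_nhds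

lemma deltaMinus_eq (x t : ℝ) : deltaMinus x t = if x ≤ t then 1 else 0 := by
  simp [deltaMinus, Set.indicator, Set.mem_Ici]

lemma deltaPlus_eq (x t : ℝ) : deltaPlus x t = if x < t then 1 else 0 := by
  simp [deltaPlus, Set.indicator, Set.mem_Ioi]

lemma deltaMinus_01 (x t : ℝ) : deltaMinus x t = 0 ∨ deltaMinus x t = 1 := by
  rw [deltaMinus_eq]; split <;> simp

lemma deltaPlus_01 (x t : ℝ) : deltaPlus x t = 0 ∨ deltaPlus x t = 1 := by
  rw [deltaPlus_eq]; split <;> simp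

lemma tendsto_tsum_delta {u : ℝ → ℝ} (hu : Summable fun x => |u x|)
    {d : ℝ → ℝ → ℝ} (hd01 : ∀ x t, d x t = 0 ∨ d x t = 1)
    {F : Filter ℝ} {e : ℝ → ℝ} (he : ∀ x, Filter.Tendsto (fun t => d x t) F (𝓝 (e x))) :
    Filter.Tendsto (fun t => ∑' x, u x * d x t) F (𝓝 (∑' x, u x * e x)) := by
  apply tendsto_tsum_of_dominated_convergence (bound := fun x => |u x|) hu
  · intro k; exact (he k).const_mul _
  · filter_upwards with t k
    rcases hd01 k t with hd | hd <;> simp [hd, abs_mul]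

lemma tendsto_deltaMinus_right (x a : ℝ) :
    Filter.Tendsto (fun t => deltaMinus x t) (𝓝[>] a) (𝓝 (deltaMinus x a)) := by
  by_cases hx : x ≤ a
  · apply tendsto_of_eventually_const
    filter_upwards [self_mem_nhdsWithin] with t ht
    rw [deltaMinus_eq, deltaMinus_eq, if_pos hx, if_pos (hx.trans (le_of_lt ht))]
  · push_neg at hx
    apply tendsto_of_eventually_const
    filter_upwards [Ioo_mem_nhdsGT hx] with t ht
    rw [deltaMinus_eq, deltaMinus_eq, if_neg (not_le.2 hx), if_neg (not_le.2 ht.2)]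

lemma tendsto_deltaPlus_right (x a : ℝ) :
    Filter.Tendsto (fun t => deltaPlus x t) (𝓝[>] a) (𝓝 (deltaMinus x a)) := by
  by_cases hx : x ≤ a
  · apply tendsto_of_eventually_const
    filter_upwards [self_mem_nhdsWithin] with t ht
    rw [deltaPlus_eq, deltaMinus_eq, if_pos hx, if_pos (lt_of_le_of_lt hx ht)]
  · push_neg at hx
    apply tendsto_of_eventually_const
    filter_upwards [Ioo_mem_nhdsGT hx] with t ht
    rw [deltaPlus_eq, deltaMinus_eq, if_neg (not_le.2 hx), if_neg (not_lt.2 (le_of_lt ht.2))]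

lemma tendsto_deltaMinus_left (x a : ℝ) :
    Filter.Tendsto (fun t => deltaMinus x t) (𝓝[<] a) (𝓝 (deltaPlus x a)) := by
  by_cases hx : x < a
  · apply tendsto_of_eventually_const
    filter_upwards [Ioo_mem_nhdsLT hx] with t ht
    rw [deltaMinus_eq, deltaPlus_eq, if_pos hx, if_pos (le_of_lt ht.1)]
  · push_neg at hx
    apply tendsto_of_eventually_const
    filter_upwards [self_mem_nhdsWithin] with t ht
    rw [deltaMinus_eq, deltaPlus_eq, if_neg (not_lt.2 hx), if_neg (not_le.2 (lt_of_lt_of_le ht hx))]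

lemma tendsto_deltaPlus_left (x a : ℝ) :
    Filter.Tendsto (fun t => deltaPlus x t) (𝓝[<] a) (𝓝 (deltaPlus x a)) := by
  by_cases hx : x < a
  · apply tendsto_of_eventually_const
    filter_upwards [Ioo_mem_nhdsLT hx] with t ht
    rw [deltaPlus_eq, deltaPlus_eq, if_pos hx, if_pos ht.1]
  · push_neg at hx
    apply tendsto_of_eventually_const
    filter_upwards [self_mem_nhdsWithin] with t ht
    rw [deltaPlus_eq, deltaPlus_eq, if_neg (not_lt.2 hx), if_neg (not_lt.2 (le_of_lt (lt_of_lt_of_le ht hx)))]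

lemma tendsto_deltaMinus_atBot (x : ℝ) :
    Filter.Tendsto (fun t => deltaMinus x t) Filter.atBot (𝓝 0) := by
  apply tendsto_of_eventually_const
  filter_upwards [Filter.eventually_lt_atBot x] with t ht
  rw [deltaMinus_eq, if_neg (not_le.2 ht)]

lemma tendsto_deltaPlus_atBot (x : ℝ) :
    Filter.Tendsto (fun t => deltaPlus x t) Filter.atBot (𝓝 0) := by
  apply tendsto_of_eventually_const
  filter_upwards [Filter.eventually_lt_atBot x] with t ht
  rw [deltaPlus_eq, if_neg (not_lt.2 (le_of_lt ht))]

variable {R f um up : ℝ → ℝ}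

lemma IsUseful.tendsto_right (h : IsUseful R f um up) (a : ℝ) :
    Filter.Tendsto R (𝓝[>] a)
      (𝓝 (f a + (∑' x : ℝ, um x * deltaMinus x a) + (∑' x : ℝ, up x * deltaMinus x a))) := by
  have hf : Filter.Tendsto f (𝓝[>] a) (𝓝 (f a)) :=
    (h.cont.tendsto a).mono_left nhdsWithin_le_nhds
  have h1 := tendsto_tsum_delta h.summable_um deltaMinus_01
    (fun x => tendsto_deltaMinus_right x a)
  have h2 := tendsto_tsum_delta h.summable_up deltaPlus_01
    (fun x => tendsto_deltaPlus_right x a)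
  exact ((hf.add h1).add h2).congr (fun t => (h.decomp t).symm)

lemma IsUseful.tendsto_left (h : IsUseful R f um up) (a : ℝ) :
    Filter.Tendsto R (𝓝[<] a)
      (𝓝 (f a + (∑' x : ℝ, um x * deltaPlus x a) + (∑' x : ℝ, up x * deltaPlus x a))) := by
  have hf : Filter.Tendsto f (𝓝[<] a) (𝓝 (f a)) :=
    (h.cont.tendsto a).mono_left nhdsWithin_le_nhds
  have h1 := tendsto_tsum_delta h.summable_um deltaMinus_01
    (fun x => tendsto_deltaMinus_left x a)
  have h2 := tendsto_tsum_delta h.summable_up deltaPlus_01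
    (fun x => tendsto_deltaPlus_left x a)
  exact ((hf.add h1).add h2).congr (fun t => (h.decomp t).symm)

lemma IsUseful.tendsto_rightLim (h : IsUseful R f um up) (a : ℝ) :
    Filter.Tendsto R (𝓝[>] a) (𝓝 (Function.rightLim R a)) := by
  have := h.tendsto_right a
  rwa [rightLim_eq_of_tendsto this]

lemma IsUseful.tendsto_leftLim (h : IsUseful R f um up) (a : ℝ) :
    Filter.Tendsto R (𝓝[<] a) (𝓝 (Function.leftLim R a)) := by
  have := h.tendsto_left a
  rwa [leftLim_eq_of_tendsto this]

lemma IsUseful.tendsto_atBot (h : IsUseful R f um up) :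
    ∃ r : ℝ, Filter.Tendsto R Filter.atBot (𝓝 r) := by
  -- limit of f at -∞ via monotone decomposition
  have hlbv : LocallyBoundedVariationOn f Set.univ := h.bddVar.locallyBoundedVariationOn
  set p : ℝ → ℝ := variationOnFromTo f Set.univ 0 with hp
  set V : ℝ := (eVariationOn f Set.univ).toReal with hV
  have hpb : ∀ x, |p x| ≤ V := by
    intro x
    rcases le_total (0:ℝ) x with hx | hx
    · rw [hp, variationOnFromTo.eq_of_le f _ hx, abs_of_nonneg ENNReal.toReal_nonneg]
      exact ENNReal.toReal_mono h.bddVar (eVariationOn.mono f Set.inter_subset_left)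
    · rw [hp, variationOnFromTo.eq_of_ge f _ hx, abs_neg, abs_of_nonneg ENNReal.toReal_nonneg]
      exact ENNReal.toReal_mono h.bddVar (eVariationOn.mono f Set.inter_subset_left)
  have hfb : ∀ x, |f x| ≤ |f 0| + V := by
    intro x
    have := h.bddVar.dist_le (Set.mem_univ x) (Set.mem_univ 0)
    rw [Real.dist_eq] at this
    calc |f x| ≤ |f x - f 0| + |f 0| := by
          have := abs_add_le (f x - f 0) (f 0); simpa using this
    _ ≤ |f 0| + V := by rw [add_comm]; exact add_le_add le_rfl this
  have hpm : Monotone p := monotoneOn_univ.mp (variationOnFromTo.monotoneOn hlbv (Set.mem_univ 0))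
  have hqm : Monotone (p - f) :=
    monotoneOn_univ.mp (variationOnFromTo.sub_self_monotoneOn hlbv (Set.mem_univ 0))
  have hpt : Filter.Tendsto p Filter.atBot (𝓝 (⨅ x, p x)) := by
    apply tendsto_atBot_ciInf hpm
    exact ⟨-V, by rintro y ⟨x, rfl⟩; exact neg_le_of_abs_le (hpb x)⟩
  have hqt : Filter.Tendsto (p - f) Filter.atBot (𝓝 (⨅ x, (p - f) x)) := by
    apply tendsto_atBot_ciInf hqm
    refine ⟨-V - (|f 0| + V), ?_⟩
    rintro y ⟨x, rfl⟩
    have := neg_le_of_abs_le (hpb x)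
    have h2 := neg_le_of_abs_le (hfb x)
    have h3 := abs_le.1 (hfb x)
    simp only [Pi.sub_apply]
    linarith [abs_le.1 (hpb x), abs_le.1 (hfb x)]
  have hft : Filter.Tendsto f Filter.atBot (𝓝 ((⨅ x, p x) - ⨅ x, (p - f) x)) := by
    have := hpt.sub hqt
    exact this.congr (fun x => by simp)
  refine ⟨(⨅ x, p x) - (⨅ x, (p - f) x) + (∑' x : ℝ, um x * 0) + (∑' x : ℝ, up x * 0), ?_⟩
  have h1 := tendsto_tsum_delta h.summable_um deltaMinus_01
    (fun x => tendsto_deltaMinus_atBot x)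
  have h2 := tendsto_tsum_delta h.summable_up deltaPlus_01
    (fun x => tendsto_deltaPlus_atBot x)
  exact ((hft.add h1).add h2).congr (fun t => (h.decomp t).symm)

end Regulated
section ST
open Function Set Filter Topology

/-- `S(z) = max (R₋(s)) (sup_{[z,s)} R)`. -/
noncomputable def Sf (R : ℝ → ℝ) (s z : ℝ) : ℝ :=
  max (Function.leftLim R s) (sSup (R '' Set.Ico z s))

/-- `T(z) = max (R₋(s)) (sup_{(z,s)} R)`. -/
noncomputable def Tf (R : ℝ → ℝ) (s z : ℝ) : ℝ :=
  max (Function.leftLim R s) (sSup (R '' Set.Ioo z s))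

variable {R : ℝ → ℝ} {s Rinf : ℝ}

lemma bddAbove_image (hRinf : ∀ z : ℝ, z < s → R z ≤ Rinf) {A : Set ℝ} (hA : A ⊆ Set.Iio s) :
    BddAbove (R '' A) := ⟨Rinf, by rintro _ ⟨w, hw, rfl⟩; exact hRinf w (hA hw)⟩

lemma L_le_Sf (z : ℝ) : Function.leftLim R s ≤ Sf R s z := le_max_left _ _

lemma L_le_Tf (z : ℝ) : Function.leftLim R s ≤ Tf R s z := le_max_left _ _

lemma mem_le_Sf (hRinf : ∀ z : ℝ, z < s → R z ≤ Rinf) {z w : ℝ} (hw : w ∈ Set.Ico z s) :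
    R w ≤ Sf R s z :=
  le_trans (le_csSup (bddAbove_image hRinf Set.Ico_subset_Iio_self) ⟨w, hw, rfl⟩) (le_max_right _ _)

lemma mem_le_Tf (hRinf : ∀ z : ℝ, z < s → R z ≤ Rinf) {z w : ℝ} (hw : w ∈ Set.Ioo z s) :
    R w ≤ Tf R s z :=
  le_trans (le_csSup (bddAbove_image hRinf Set.Ioo_subset_Iio_self) ⟨w, hw, rfl⟩) (le_max_right _ _)

lemma Tf_le_Sf (hRinf : ∀ z : ℝ, z < s → R z ≤ Rinf) {z : ℝ} (hz : z < s) :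
    Tf R s z ≤ Sf R s z := by
  apply max_le (le_max_left _ _)
  refine le_trans (csSup_le_csSup (bddAbove_image hRinf Set.Ico_subset_Iio_self) ?_
    (Set.image_mono Set.Ioo_subset_Ico_self)) (le_max_right _ _)
  exact (Set.nonempty_Ioo.2 hz).image _

lemma Sf_le_Tf_of_lt (hRinf : ∀ z : ℝ, z < s → R z ≤ Rinf) {z w : ℝ} (hzw : z < w) (hw : w < s) :
    Sf R s w ≤ Tf R s z := by
  apply max_le (le_max_left _ _)
  refine le_trans (csSup_le_csSup (bddAbove_image hRinf Set.Ioo_subset_Iio_self) ?_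
    (Set.image_mono fun v hv => ⟨lt_of_lt_of_le hzw hv.1, hv.2⟩)) (le_max_right _ _)
  exact (Set.nonempty_Ico.2 hw).image _

lemma R_le_Sf (hRinf : ∀ z : ℝ, z < s → R z ≤ Rinf) {z : ℝ} (hz : z < s) : R z ≤ Sf R s z :=
  mem_le_Sf hRinf ⟨le_rfl, hz⟩

lemma Sf_le_max (hRinf : ∀ z : ℝ, z < s → R z ≤ Rinf) {z : ℝ} (hz : z < s) :
    Sf R s z ≤ max (R z) (Tf R s z) := by
  apply max_le (le_trans (L_le_Tf z) (le_max_right _ _))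
  apply csSup_le ((Set.nonempty_Ico.2 hz).image _)
  rintro _ ⟨v, hv, rfl⟩
  rcases eq_or_lt_of_le hv.1 with rfl | hlt
  · exact le_max_left _ _
  · exact le_trans (mem_le_Tf hRinf ⟨hlt, hv.2⟩) (le_max_right _ _)

lemma L_le_Rinf (hRinf : ∀ z : ℝ, z < s → R z ≤ Rinf)
    (hreg : Filter.Tendsto R (𝓝[<] s) (𝓝 (Function.leftLim R s))) :
    Function.leftLim R s ≤ Rinf := by
  apply le_of_tendsto hreg
  filter_upwards [self_mem_nhdsWithin] with w hw
  exact hRinf w hw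

lemma Sf_le_Rinf (hRinf : ∀ z : ℝ, z < s → R z ≤ Rinf)
    (hreg : Filter.Tendsto R (𝓝[<] s) (𝓝 (Function.leftLim R s))) {z : ℝ} (hz : z < s) :
    Sf R s z ≤ Rinf := by
  apply max_le (L_le_Rinf hRinf hreg)
  apply csSup_le ((Set.nonempty_Ico.2 hz).image _)
  rintro _ ⟨v, hv, rfl⟩
  exact hRinf v hv.2

lemma tendsto_Sf_right (hRinf : ∀ z : ℝ, z < s → R z ≤ Rinf) {a : ℝ} (ha : a < s) :
    Filter.Tendsto (Sf R s) (𝓝[>] a) (𝓝 (Tf R s a)) := by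
  rw [tendsto_order]
  constructor
  · intro c hc
    rcases lt_max_iff.1 hc with hc | hc
    · filter_upwards with w
      exact lt_of_lt_of_le hc (le_max_left _ _)
    · obtain ⟨_, ⟨b, hb, rfl⟩, hcb⟩ := exists_lt_of_lt_csSup ((Set.nonempty_Ioo.2 ha).image _) hc
      filter_upwards [Ioo_mem_nhdsGT hb.1] with w hw
      exact lt_of_lt_of_le hcb (mem_le_Sf hRinf ⟨le_of_lt hw.2, hb.2⟩)
  · intro c hc
    filter_upwards [Ioo_mem_nhdsGT ha] with w hw
    exact lt_of_le_of_lt (Sf_le_Tf_of_lt hRinf hw.1 hw.2) hc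

lemma tendsto_Tf_right (hRinf : ∀ z : ℝ, z < s → R z ≤ Rinf) {a : ℝ} (ha : a < s) :
    Filter.Tendsto (Tf R s) (𝓝[>] a) (𝓝 (Tf R s a)) := by
  rw [tendsto_order]
  constructor
  · intro c hc
    rcases lt_max_iff.1 hc with hc | hc
    · filter_upwards with w
      exact lt_of_lt_of_le hc (le_max_left _ _)
    · obtain ⟨_, ⟨b, hb, rfl⟩, hcb⟩ := exists_lt_of_lt_csSup ((Set.nonempty_Ioo.2 ha).image _) hc
      filter_upwards [Ioo_mem_nhdsGT hb.1] with w hw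
      exact lt_of_lt_of_le hcb (mem_le_Tf hRinf ⟨hw.2, hb.2⟩)
  · intro c hc
    filter_upwards [Ioo_mem_nhdsGT ha] with w hw
    have h1 : Tf R s w ≤ Sf R s w := Tf_le_Sf hRinf hw.2
    exact lt_of_le_of_lt (h1.trans (Sf_le_Tf_of_lt hRinf hw.1 hw.2)) hc

lemma tendsto_Sf_left (hRinf : ∀ z : ℝ, z < s → R z ≤ Rinf) {a : ℝ}
    (hreg : Filter.Tendsto R (𝓝[<] a) (𝓝 (Function.leftLim R a))) (ha : a < s) :
    Filter.Tendsto (Sf R s) (𝓝[<] a) (𝓝 (max (Sf R s a) (Function.leftLim R a))) := by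
  rw [tendsto_order]
  constructor
  · intro c hc
    rcases lt_max_iff.1 hc with hc | hc
    · rcases lt_max_iff.1 hc with hc | hc
      · filter_upwards with w
        exact lt_of_lt_of_le hc (le_max_left _ _)
      · obtain ⟨_, ⟨b, hb, rfl⟩, hcb⟩ :=
          exists_lt_of_lt_csSup ((Set.nonempty_Ico.2 ha).image _) hc
        filter_upwards [self_mem_nhdsWithin] with w hw
        exact lt_of_lt_of_le hcb (mem_le_Sf hRinf ⟨le_of_lt (lt_of_lt_of_le hw hb.1), hb.2⟩)
    · filter_upwards [(tendsto_order.1 hreg).1 c hc, self_mem_nhdsWithin] with w hw hw'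
      exact lt_of_lt_of_le hw (mem_le_Sf hRinf ⟨le_rfl, lt_trans hw' ha⟩)
  · intro c hc
    set U := max (Sf R s a) (Function.leftLim R a) with hU
    set c' := (U + c) / 2 with hc'
    have hUc' : U < c' := by rw [hc']; linarith
    have hc'c : c' < c := by rw [hc']; linarith
    have hE : {v : ℝ | R v < c'} ∈ 𝓝[<] a := by
      apply (tendsto_order.1 hreg).2
      exact lt_of_le_of_lt (le_trans (le_max_right _ _) (le_of_eq hU.symm)) hUc'
    obtain ⟨l, hl, hlsub⟩ := mem_nhdsLT_iff_exists_Ioo_subset.1 hE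
    filter_upwards [Ioo_mem_nhdsLT hl] with w hw
    have hws : w < s := lt_trans hw.2 ha
    apply lt_of_le_of_lt (max_le ?_ ?_) (show max U c' < c from max_lt (lt_trans hUc' hc'c) hc'c)
    · exact le_trans (le_trans (L_le_Sf a) (le_max_left _ _)) (le_max_left _ _)
    · apply csSup_le ((Set.nonempty_Ico.2 hws).image _)
      rintro _ ⟨v, hv, rfl⟩
      rcases lt_or_ge v a with hva | hva
      · exact le_trans (le_of_lt (hlsub ⟨lt_of_lt_of_le hw.1 hv.1, hva⟩)) (le_max_right _ _)
      · exact le_trans (le_trans (mem_le_Sf hRinf ⟨hva, hv.2⟩) (le_max_left _ _)) (le_max_left _ _)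

lemma tendsto_Tf_left (hRinf : ∀ z : ℝ, z < s → R z ≤ Rinf) {a : ℝ}
    (hreg : Filter.Tendsto R (𝓝[<] a) (𝓝 (Function.leftLim R a))) (ha : a < s) :
    Filter.Tendsto (Tf R s) (𝓝[<] a) (𝓝 (max (Sf R s a) (Function.leftLim R a))) := by
  rw [tendsto_order]
  constructor
  · intro c hc
    rcases lt_max_iff.1 hc with hc | hc
    · rcases lt_max_iff.1 hc with hc | hc
      · filter_upwards with w
        exact lt_of_lt_of_le hc (le_max_left _ _)
      · obtain ⟨_, ⟨b, hb, rfl⟩, hcb⟩ :=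
          exists_lt_of_lt_csSup ((Set.nonempty_Ico.2 ha).image _) hc
        filter_upwards [self_mem_nhdsWithin] with w hw
        exact lt_of_lt_of_le hcb (mem_le_Tf hRinf ⟨lt_of_lt_of_le hw hb.1, hb.2⟩)
    · have hE : {v : ℝ | c < R v} ∈ 𝓝[<] a := (tendsto_order.1 hreg).1 c hc
      obtain ⟨l, hl, hlsub⟩ := mem_nhdsLT_iff_exists_Ioo_subset.1 hE
      filter_upwards [Ioo_mem_nhdsLT hl] with w hw
      have hv : (w + a) / 2 ∈ Set.Ioo l a := ⟨lt_trans hw.1 (by linarith [hw.2]), by linarith [hw.2]⟩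
      have hv2 : (w + a) / 2 ∈ Set.Ioo w s := ⟨by linarith [hw.2], by linarith [hw.2, ha]⟩
      exact lt_of_lt_of_le (hlsub hv) (mem_le_Tf hRinf hv2)
  · intro c hc
    filter_upwards [(tendsto_order.1 (tendsto_Sf_left hRinf hreg ha)).2 c hc,
      self_mem_nhdsWithin] with w hw hw'
    exact lt_of_le_of_lt (Tf_le_Sf hRinf (lt_trans hw' ha)) hw

lemma tendsto_Sf_atBot (hRinf : ∀ z : ℝ, z < s → R z ≤ Rinf) (hs : True) :
    Filter.Tendsto (Sf R s) Filter.atBot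
      (𝓝 (max (Function.leftLim R s) (sSup (R '' Set.Iio s)))) := by
  rw [tendsto_order]
  constructor
  · intro c hc
    rcases lt_max_iff.1 hc with hc | hc
    · filter_upwards with w
      exact lt_of_lt_of_le hc (le_max_left _ _)
    · obtain ⟨_, ⟨b, hb, rfl⟩, hcb⟩ :=
        exists_lt_of_lt_csSup ((Set.nonempty_Iio).image _) hc
      filter_upwards [Filter.eventually_le_atBot b] with w hw
      exact lt_of_lt_of_le hcb (mem_le_Sf hRinf ⟨hw, hb⟩)
  · intro c hc
    filter_upwards [Filter.eventually_lt_atBot s] with w hw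
    apply lt_of_le_of_lt (max_le (le_max_left _ _) ?_) hc
    refine le_trans (csSup_le_csSup (bddAbove_image hRinf (fun v hv => hv))
      ((Set.nonempty_Ico.2 hw).image _) (Set.image_mono Set.Ico_subset_Iio_self)) (le_max_right _ _)

lemma tendsto_Tf_atBot (hRinf : ∀ z : ℝ, z < s → R z ≤ Rinf) :
    Filter.Tendsto (Tf R s) Filter.atBot
      (𝓝 (max (Function.leftLim R s) (sSup (R '' Set.Iio s)))) := by
  rw [tendsto_order]
  constructor
  · intro c hc
    rcases lt_max_iff.1 hc with hc | hc
    · filter_upwards with w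
      exact lt_of_lt_of_le hc (le_max_left _ _)
    · obtain ⟨_, ⟨b, hb, rfl⟩, hcb⟩ :=
        exists_lt_of_lt_csSup ((Set.nonempty_Iio).image _) hc
      filter_upwards [Filter.eventually_lt_atBot b] with w hw
      exact lt_of_lt_of_le hcb (mem_le_Tf hRinf ⟨hw, hb⟩)
  · intro c hc
    filter_upwards [Filter.eventually_lt_atBot s] with w hw
    apply lt_of_le_of_lt (le_trans (Tf_le_Sf hRinf hw) (max_le (le_max_left _ _) ?_)) hc
    refine le_trans (csSup_le_csSup (bddAbove_image hRinf (fun v hv => hv))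
      ((Set.nonempty_Ico.2 hw).image _) (Set.image_mono Set.Ico_subset_Iio_self)) (le_max_right _ _)

end ST
section Islands
open Function Set Filter Topology

variable {R : ℝ → ℝ} {s Rinf : ℝ}

lemma Rval_coe (R : ℝ → ℝ) (Rinf : ℝ) (r : ℝ) : Rval R Rinf ((r : ℝ) : EReal) = R r := by
  rw [Rval, if_neg (EReal.coe_ne_bot r)]
  simp

lemma le_R_sSup (hmax : MaxEqSelf R)
    (hregL : ∀ a : ℝ, Filter.Tendsto R (𝓝[<] a) (𝓝 (Function.leftLim R a)))
    {C : Set ℝ} (hne : C.Nonempty) (hbdd : BddAbove C) {c : ℝ} (hc : ∀ w ∈ C, c ≤ R w) :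
    c ≤ R (sSup C) := by
  by_contra hlt
  push_neg at hlt
  by_cases hmem : sSup C ∈ C
  · exact absurd (hc _ hmem) (not_le.2 hlt)
  · have h1 : Function.leftLim R (sSup C) < c := lt_of_le_of_lt (hmax _).1 hlt
    have hE : {v : ℝ | R v < c} ∈ 𝓝[<] (sSup C) := (tendsto_order.1 (hregL _)).2 c h1
    obtain ⟨l, hl, hsub⟩ := mem_nhdsLT_iff_exists_Ioo_subset.1 hE
    obtain ⟨w, hwC, hwl⟩ := exists_lt_of_lt_csSup hne hl
    have hwlt : w < sSup C :=
      lt_of_le_of_ne (le_csSup hbdd hwC) (fun h => hmem (h ▸ hwC))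
    exact absurd (hc w hwC) (not_le.2 (hsub ⟨hwl, hwlt⟩))

lemma le_R_sInf (hmax : MaxEqSelf R)
    (hregR : ∀ a : ℝ, Filter.Tendsto R (𝓝[>] a) (𝓝 (Function.rightLim R a)))
    {C : Set ℝ} (hne : C.Nonempty) (hbdd : BddBelow C) {c : ℝ} (hc : ∀ w ∈ C, c ≤ R w) :
    c ≤ R (sInf C) := by
  by_contra hlt
  push_neg at hlt
  by_cases hmem : sInf C ∈ C
  · exact absurd (hc _ hmem) (not_le.2 hlt)
  · have h1 : Function.rightLim R (sInf C) < c := lt_of_le_of_lt (hmax _).2 hlt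
    have hE : {v : ℝ | R v < c} ∈ 𝓝[>] (sInf C) := (tendsto_order.1 (hregR _)).2 c h1
    obtain ⟨l, hl, hsub⟩ := mem_nhdsGT_iff_exists_Ioo_subset.1 hE
    obtain ⟨w, hwC, hwl⟩ := exists_lt_of_csInf_lt hne hl
    have hwlt : sInf C < w :=
      lt_of_le_of_ne (csInf_le hbdd hwC) (fun h => hmem (h ▸ hwC))
    exact absurd (hc w hwC) (not_le.2 (hsub ⟨hwlt, hwl⟩))

/-- Lemma K: the sup of `R` on `[c, s)` is attained, or is at most `R₋(s)`. -/
lemma sup_attained_or_le (hmax : MaxEqSelf R)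
    (hregL : ∀ a : ℝ, Filter.Tendsto R (𝓝[<] a) (𝓝 (Function.leftLim R a)))
    (hregR : ∀ a : ℝ, Filter.Tendsto R (𝓝[>] a) (𝓝 (Function.rightLim R a)))
    (hRinf : ∀ z : ℝ, z < s → R z ≤ Rinf) {c : ℝ} (hc : c < s) :
    (∃ w ∈ Set.Ico c s, R w = sSup (R '' Set.Ico c s)) ∨
      sSup (R '' Set.Ico c s) ≤ Function.leftLim R s := by
  set φ : ℝ → ℝ := fun w => sSup (R '' Set.Ico w s) with hφ
  set P : ℝ := φ c with hP
  have hφanti : ∀ {w₁ w₂ : ℝ}, w₁ ≤ w₂ → w₂ < s → φ w₂ ≤ φ w₁ := by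
    intro w₁ w₂ h12 h2s
    exact csSup_le_csSup (bddAbove_image hRinf Set.Ico_subset_Iio_self)
      ((Set.nonempty_Ico.2 h2s).image _)
      (Set.image_mono fun v hv => ⟨le_trans h12 hv.1, hv.2⟩)
  set G : Set ℝ := {w : ℝ | c ≤ w ∧ w < s ∧ φ w = P} with hG
  have hGc : c ∈ G := ⟨le_rfl, hc, rfl⟩
  have hGbdd : BddAbove G := ⟨s, fun w hw => le_of_lt hw.2.1⟩
  set γ : ℝ := sSup G with hγdef
  have hγc : c ≤ γ := le_csSup hGbdd hGc
  have hγs : γ ≤ s := csSup_le ⟨c, hGc⟩ (fun w hw => hw.2.1.le)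
  have hG1 : ∀ w : ℝ, c ≤ w → w < γ → φ w = P := by
    intro w hcw hwγ
    obtain ⟨g, hgG, hwg⟩ := exists_lt_of_lt_csSup ⟨c, hGc⟩ hwγ
    refine le_antisymm (hφanti hcw (lt_trans hwg hgG.2.1)) ?_
    rw [← hgG.2.2]
    exact hφanti (le_of_lt hwg) hgG.2.1
  have hG2 : ∀ w : ℝ, γ < w → w < s → φ w < P := by
    intro w hγw hws
    have hwG : w ∉ G := fun hwG => absurd (le_csSup hGbdd hwG) (not_le.2 hγw)
    have h1 : φ w ≤ P := hφanti (le_trans hγc (le_of_lt hγw)) hws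
    exact lt_of_le_of_ne h1 (fun he => hwG ⟨le_trans hγc hγw.le, hws, he⟩)
  rcases eq_or_lt_of_le hγs with hγeq | hγlt
  · -- γ = s : sup ≤ leftLim R s
    right
    by_contra hPL
    push_neg at hPL
    set L := Function.leftLim R s with hL
    have hε : L < (L + P) / 2 := by linarith
    have hE : {v : ℝ | R v < (L + P) / 2} ∈ 𝓝[<] s := (tendsto_order.1 (hregL s)).2 _ hε
    obtain ⟨l, hl, hsub⟩ := mem_nhdsLT_iff_exists_Ioo_subset.1 hE
    set w₁ : ℝ := max c ((l + s) / 2) with hw₁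
    have hw₁s : w₁ < s := max_lt hc (by simp only [Set.mem_Iio] at hl; linarith)
    have hφw₁ : φ w₁ = P := hG1 w₁ (le_max_left _ _) (hγeq ▸ hw₁s)
    have hlt2 : (L + P) / 2 < φ w₁ := by rw [hφw₁]; linarith
    obtain ⟨_, ⟨v, hv, rfl⟩, hvgt⟩ :=
      exists_lt_of_lt_csSup ((Set.nonempty_Ico.2 hw₁s).image _) hlt2
    have hvl : l < v := by
      simp only [Set.mem_Iio] at hl
      have : (l + s) / 2 ≤ w₁ := le_max_right _ _
      linarith [hv.1]
    exact absurd (hsub ⟨hvl, hv.2⟩) (not_lt.2 (le_of_lt hvgt))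
  · -- γ < s : sup attained at γ
    left
    refine ⟨γ, ⟨hγc, hγlt⟩, ?_⟩
    have hRγP : R γ ≤ P :=
      le_csSup (bddAbove_image hRinf Set.Ico_subset_Iio_self) ⟨γ, ⟨hγc, hγlt⟩, rfl⟩
    refine le_antisymm hRγP ?_
    by_contra hRγ
    push_neg at hRγ
    set m := R γ with hm
    have hmP : (m + P) / 2 < P := by linarith
    have hlL : Function.leftLim R γ < (m + P) / 2 := lt_of_le_of_lt (hmax γ).1 (by linarith)
    have hlR : Function.rightLim R γ < (m + P) / 2 := lt_of_le_of_lt (hmax γ).2 (by linarith)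
    have hE₁ : {v : ℝ | R v < (m + P) / 2} ∈ 𝓝[<] γ := (tendsto_order.1 (hregL γ)).2 _ hlL
    have hE₂ : {v : ℝ | R v < (m + P) / 2} ∈ 𝓝[>] γ := (tendsto_order.1 (hregR γ)).2 _ hlR
    obtain ⟨l₁, hl₁, hsub₁⟩ := mem_nhdsLT_iff_exists_Ioo_subset.1 hE₁
    obtain ⟨r₂, hr₂, hsub₂⟩ := mem_nhdsGT_iff_exists_Ioo_subset.1 hE₂
    simp only [Set.mem_Iio, Set.mem_Ioi] at hl₁ hr₂
    set w' : ℝ := min ((γ + r₂) / 2) ((γ + s) / 2) with hw'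
    have hγw' : γ < w' := lt_min (by linarith) (by linarith)
    have hw's : w' < s := lt_of_le_of_lt (min_le_right _ _) (by linarith)
    have hw'r₂ : w' < r₂ := lt_of_le_of_lt (min_le_left _ _) (by linarith)
    set t : ℝ := max ((m + P) / 2) (φ w') with ht
    have htP : t < P := max_lt hmP (hG2 w' hγw' hw's)
    set w : ℝ := max c ((l₁ + γ) / 2) with hw
    have hwγ : w ≤ γ := max_le hγc (by linarith)
    have hwl₁ : l₁ < w := lt_of_lt_of_le (by linarith) (le_max_right _ _)
    have hφw : φ w = P := by
      rcases lt_or_eq_of_le hwγ with hlt | heq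
      · exact hG1 w (le_max_left _ _) hlt
      · rcases le_or_gt c ((l₁ + γ) / 2) with h' | h'
        · exfalso
          have he : w = (l₁ + γ) / 2 := max_eq_right h'
          rw [he] at heq
          linarith
        · have he : w = c := max_eq_left h'.le
          rw [he]
    have hlt3 : t < φ w := hφw ▸ htP
    obtain ⟨_, ⟨v, hv, rfl⟩, hvgt⟩ :=
      exists_lt_of_lt_csSup ((Set.nonempty_Ico.2 (lt_of_le_of_lt hwγ hγlt)).image _) hlt3
    have hvw' : v < w' := by
      by_contra hge
      push_neg at hge
      have : R v ≤ φ w' :=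
        le_csSup (bddAbove_image hRinf Set.Ico_subset_Iio_self) ⟨v, ⟨hge, hv.2⟩, rfl⟩
      exact absurd hvgt (not_lt.2 (this.trans (le_max_right _ _)))
    have hvP : (m + P) / 2 < R v := lt_of_le_of_lt (le_max_left _ _) hvgt
    rcases lt_trichotomy v γ with hvγ | hvγ | hvγ
    · exact absurd (hsub₁ ⟨lt_of_lt_of_le hwl₁ hv.1, hvγ⟩) (not_lt.2 (le_of_lt hvP))
    · rw [hvγ] at hvP; rw [hm] at hvP; linarith
    · exact absurd (hsub₂ ⟨hvγ, lt_of_lt_of_le hvw' (min_le_left _ _) |>.trans_le (by linarith)⟩)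
        (not_lt.2 (le_of_lt hvP))

end Islands
section IslandsMain
open Function Set Filter Topology

variable {R : ℝ → ℝ} {s Rinf : ℝ}

/-- Lemma 3.4 (one direction): if `R z < S z`, then `z` lies in (the closure of) an island. -/
lemma exists_island (hmax : MaxEqSelf R)
    (hregL : ∀ a : ℝ, Filter.Tendsto R (𝓝[<] a) (𝓝 (Function.leftLim R a)))
    (hregR : ∀ a : ℝ, Filter.Tendsto R (𝓝[>] a) (𝓝 (Function.rightLim R a)))
    (hRinf : ∀ z : ℝ, z < s → R z ≤ Rinf) {z : ℝ} (hz : z < s) (hlt : R z < Sf R s z) :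
    (∃ x y : EReal, IsIsland R Rinf s x y ∧ x < (z : ℝ) ∧ ((z : ℝ) : EReal) ≤ y ∧
        y < ((s : ℝ) : EReal)) ∨
    (∃ x : EReal, IsIsland R Rinf s x ((s : ℝ) : EReal) ∧ x < ((z : ℝ) : EReal) ∧
        ((z : ℝ) : EReal) < ((s : ℝ) : EReal)) := by
  set M : ℝ := Sf R s z with hM
  set A : Set ℝ := {w : ℝ | z < w ∧ w < s ∧ M ≤ R w} with hA
  by_cases hAne : A.Nonempty
  · -- type (ii) island
    left
    set y : ℝ := sInf A with hy
    have hAbdd : BddBelow A := ⟨z, fun w hw => hw.1.le⟩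
    have hzy : z ≤ y := le_csInf hAne (fun w hw => hw.1.le)
    have hys : y < s := by
      obtain ⟨w₀, hw₀⟩ := hAne
      exact lt_of_le_of_lt (csInf_le hAbdd hw₀) hw₀.2.1
    have hMy : M ≤ R y := le_R_sInf hmax hregR hAne hAbdd (fun w hw => hw.2.2)
    have hzylt : z < y :=
      lt_of_le_of_ne hzy (fun he => absurd hMy (not_le.2 (he ▸ hlt)))
    have hRy : R y = M := le_antisymm (mem_le_Sf hRinf ⟨hzy, hys⟩) hMy
    set B : Set ℝ := {w : ℝ | w < y ∧ M ≤ R w} with hB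
    have hBz : ∀ w ∈ B, w ≤ z := by
      intro w hw
      by_contra hwz
      push_neg at hwz
      exact absurd (csInf_le hAbdd ⟨hwz, lt_trans hw.1 hys, hw.2⟩) (not_le.2 hw.1)
    by_cases hBne : B.Nonempty
    · have hsupz : sSup B ≤ z := csSup_le hBne hBz
      have hsupz' : sSup B < z := by
        rcases lt_or_eq_of_le hsupz with h' | h'
        · exact h'
        · exfalso
          have := le_R_sSup hmax hregL hBne ⟨z, hBz⟩ (fun w hw => hw.2)
          rw [h'] at this
          exact absurd this (not_le.2 hlt)
      refine ⟨((sSup B : ℝ) : EReal), ((y : ℝ) : EReal), ⟨?_, Or.inr ⟨y, rfl, hys, ?_, ?_, ?_, ?_⟩⟩,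
        ?_, ?_, ?_⟩
      · exact_mod_cast lt_trans hsupz' hzylt
      · rw [hRy, Rval_coe]
        exact le_R_sSup hmax hregL hBne ⟨z, hBz⟩ (fun w hw => hw.2)
      · rw [hRy]; exact L_le_Sf z
      · intro v hxv hvy
        rw [EReal.coe_lt_coe_iff] at hxv hvy
        have hvB : v ∉ B := fun hvB => absurd (le_csSup ⟨z, hBz⟩ hvB) (not_le.2 hxv)
        rw [hRy]
        by_contra hc
        push_neg at hc
        exact hvB ⟨hvy, hc⟩
      · intro w hyw hws
        rw [hRy]
        exact mem_le_Sf hRinf ⟨le_of_lt (lt_trans hzylt hyw), hws⟩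
      · exact_mod_cast hsupz'
      · exact_mod_cast hzy
      · exact_mod_cast hys
    · refine ⟨(⊥ : EReal), ((y : ℝ) : EReal), ⟨bot_lt_iff_ne_bot.2 (EReal.coe_ne_bot y),
        Or.inr ⟨y, rfl, hys, ?_, ?_, ?_, ?_⟩⟩, bot_lt_iff_ne_bot.2 (EReal.coe_ne_bot z), ?_, ?_⟩
      · rw [hRy, Rval]
        simp only [if_pos rfl]
        exact Sf_le_Rinf hRinf (hregL s) hz
      · rw [hRy]; exact L_le_Sf z
      · intro v hxv hvy
        rw [EReal.coe_lt_coe_iff] at hvy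
        have hvB : v ∉ B := fun hvB => hBne ⟨v, hvB⟩
        rw [hRy]
        by_contra hc
        push_neg at hc
        exact hvB ⟨hvy, hc⟩
      · intro w hyw hws
        rw [hRy]
        exact mem_le_Sf hRinf ⟨le_of_lt (lt_trans hzylt hyw), hws⟩
      · exact_mod_cast hzy
      · exact_mod_cast hys
  · -- type (i) island
    right
    have hAe : ∀ w : ℝ, z < w → w < s → R w < M := by
      intro w h1 h2
      by_contra hc
      push_neg at hc
      exact hAne ⟨w, h1, h2, hc⟩
    have hML : M = Function.leftLim R s := by
      refine le_antisymm ?_ (L_le_Sf z)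
      apply max_le le_rfl
      by_contra hLφ
      push_neg at hLφ
      rcases sup_attained_or_le hmax hregL hregR hRinf hz with ⟨w, hw, hwsup⟩ | hle
      · have hMφ : M = sSup (R '' Set.Ico z s) := max_eq_right hLφ.le
        rcases eq_or_lt_of_le hw.1 with he | hlt'
        · rw [← he] at hwsup
          rw [hMφ, ← hwsup] at hlt
          exact lt_irrefl _ hlt
        · have h2 := hAe w hlt' hw.2
          rw [hMφ, ← hwsup] at h2
          exact lt_irrefl _ h2
      · exact absurd hle (not_le.2 hLφ)
    set B₁ : Set ℝ := {w : ℝ | w ≤ z ∧ M ≤ R w} with hB₁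
    by_cases hBne : B₁.Nonempty
    · have hsupz : sSup B₁ ≤ z := csSup_le hBne (fun w hw => hw.1)
      have hsupz' : sSup B₁ < z := by
        rcases lt_or_eq_of_le hsupz with h' | h'
        · exact h'
        · exfalso
          have := le_R_sSup hmax hregL hBne ⟨z, fun w hw => hw.1⟩ (fun w hw => hw.2)
          rw [h'] at this
          exact absurd this (not_le.2 hlt)
      refine ⟨((sSup B₁ : ℝ) : EReal), ⟨?_, Or.inl ⟨rfl, ?_, ?_⟩⟩, ?_, ?_⟩
      · exact_mod_cast lt_trans hsupz' hz
      · rw [Rval_coe, ← hML]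
        exact le_R_sSup hmax hregL hBne ⟨z, fun w hw => hw.1⟩ (fun w hw => hw.2)
      · intro v hxv hvs
        rw [EReal.coe_lt_coe_iff] at hxv
        rw [← hML]
        rcases le_or_gt v z with hvz | hvz
        · have hvB : v ∉ B₁ := fun hvB => absurd (le_csSup ⟨z, fun w hw => hw.1⟩ hvB)
            (not_le.2 hxv)
          by_contra hc
          push_neg at hc
          exact hvB ⟨hvz, hc⟩
        · exact hAe v hvz hvs
      · exact_mod_cast hsupz'
      · exact_mod_cast hz
    · refine ⟨(⊥ : EReal), ⟨bot_lt_iff_ne_bot.2 (EReal.coe_ne_bot s), Or.inl ⟨rfl, ?_, ?_⟩⟩,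
        bot_lt_iff_ne_bot.2 (EReal.coe_ne_bot z), ?_⟩
      · rw [Rval]
        simp only [if_pos rfl]
        rw [← hML]
        exact Sf_le_Rinf hRinf (hregL s) hz
      · intro v hxv hvs
        rw [← hML]
        rcases le_or_gt v z with hvz | hvz
        · have hvB : v ∉ B₁ := fun hvB => hBne ⟨v, hvB⟩
          by_contra hc
          push_neg at hc
          exact hvB ⟨hvz, hc⟩
        · exact hAe v hvz hvs
      · exact_mod_cast hz

end IslandsMain
section HfunLemmas
open Function Set Filter Topology

variable {R : ℝ → ℝ} {s Rinf : ℝ}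

lemma island_val (hRinf : ∀ z : ℝ, z < s → R z ≤ Rinf) {x y : EReal} {z : ℝ} (hz : z < s)
    (hisl : IsIsland R Rinf s x y) (hxz : x < ((z : ℝ) : EReal)) (hzy : ((z : ℝ) : EReal) ≤ y)
    (hys : y < ((s : ℝ) : EReal)) : R y.toReal = Sf R s z := by
  obtain ⟨hxy, hcase⟩ := hisl
  rcases hcase with ⟨hyeq, -⟩ | ⟨yr, hyeq, hyrs, hRyx, hLy, hint, hright⟩
  · exact absurd hyeq (ne_of_lt hys)
  · subst hyeq
    rw [EReal.toReal_coe]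
    have hzyr : z ≤ yr := by exact_mod_cast hzy
    apply le_antisymm (mem_le_Sf hRinf ⟨hzyr, hyrs⟩)
    apply max_le hLy
    apply csSup_le ((Set.nonempty_Ico.2 hz).image _)
    rintro _ ⟨v, hv, rfl⟩
    rcases lt_trichotomy v yr with hvy | hvy | hvy
    · refine (hint v (lt_of_lt_of_le hxz ?_) (by exact_mod_cast hvy)).le
      exact_mod_cast hv.1
    · rw [hvy]
    · exact hright v hvy hv.2

lemma island_val_s {z : ℝ} (hz : z < s) {x : EReal}
    (hisl : IsIsland R Rinf s x ((s : ℝ) : EReal)) (hxz : x < ((z : ℝ) : EReal)) :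
    Function.leftLim R s = Sf R s z := by
  obtain ⟨hxy, hcase⟩ := hisl
  rcases hcase with ⟨-, hRx, hIio⟩ | ⟨yr, hyeq, hyrs, -⟩
  · apply le_antisymm (L_le_Sf z)
    apply max_le le_rfl
    apply csSup_le ((Set.nonempty_Ico.2 hz).image _)
    rintro _ ⟨v, hv, rfl⟩
    refine (hIio v (lt_of_lt_of_le hxz ?_) hv.2).le
    exact_mod_cast hv.1
  · have : s = yr := by exact_mod_cast hyeq
    exact absurd hyrs (by rw [← this]; exact lt_irrefl s)

lemma Hfun_eq_Sf (hmax : MaxEqSelf R)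
    (hregL : ∀ a : ℝ, Filter.Tendsto R (𝓝[<] a) (𝓝 (Function.leftLim R a)))
    (hregR : ∀ a : ℝ, Filter.Tendsto R (𝓝[>] a) (𝓝 (Function.rightLim R a)))
    (hRinf : ∀ z : ℝ, z < s → R z ≤ Rinf) {z : ℝ} (hz : z < s) :
    Hfun R Rinf s ((z : ℝ) : EReal) = Sf R s z := by
  unfold Hfun
  split
  case isTrue h1 =>
    obtain ⟨hisl, hxz, hzy, hys⟩ := h1.choose_spec.choose_spec
    exact island_val hRinf hz hisl hxz hzy hys
  case isFalse h1 =>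
    split
    case isTrue h2 =>
      obtain ⟨x, hisl, hxz, -⟩ := h2
      exact island_val_s hz hisl hxz
    case isFalse h2 =>
      rw [Rval_coe]
      by_contra hne
      have hlt : R z < Sf R s z := lt_of_le_of_ne (R_le_Sf hRinf hz) hne
      rcases exists_island hmax hregL hregR hRinf hz hlt with hI | hI
      · exact h1 hI
      · exact h2 hI

lemma Hfun_bot : Hfun R Rinf s ⊥ = Rinf := by
  unfold Hfun
  split
  case isTrue h1 =>
    exfalso
    obtain ⟨x, y, -, hx, -⟩ := h1
    exact not_lt_bot hx
  case isFalse h1 =>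
    split
    case isTrue h2 =>
      exfalso
      obtain ⟨x, -, hx, -⟩ := h2
      exact not_lt_bot hx
    case isFalse h2 =>
      rw [Rval, if_pos rfl]

lemma HplusE_coe (hmax : MaxEqSelf R)
    (hregL : ∀ a : ℝ, Filter.Tendsto R (𝓝[<] a) (𝓝 (Function.leftLim R a)))
    (hregR : ∀ a : ℝ, Filter.Tendsto R (𝓝[>] a) (𝓝 (Function.rightLim R a)))
    (hRinf : ∀ z : ℝ, z < s → R z ≤ Rinf) {a : ℝ} (ha : a < s) :
    HplusE R Rinf s ((a : ℝ) : EReal) = Tf R s a := by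
  rw [HplusE, if_neg (EReal.coe_ne_bot a), EReal.toReal_coe]
  apply rightLim_eq_of_tendsto
  apply Filter.Tendsto.congr' _ (tendsto_Sf_right hRinf ha)
  filter_upwards [Ioo_mem_nhdsGT ha] with w hw
  exact (Hfun_eq_Sf hmax hregL hregR hRinf hw.2).symm

lemma RtildeE_coe (hmax : MaxEqSelf R)
    (hregL : ∀ a : ℝ, Filter.Tendsto R (𝓝[<] a) (𝓝 (Function.leftLim R a)))
    (hregR : ∀ a : ℝ, Filter.Tendsto R (𝓝[>] a) (𝓝 (Function.rightLim R a)))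
    (hRinf : ∀ z : ℝ, z < s → R z ≤ Rinf) {a : ℝ} (ha : a < s) :
    RtildeE R Rinf s ((a : ℝ) : EReal) = Sf R s a + Tf R s a - R a := by
  rw [RtildeE, Hfun_eq_Sf hmax hregL hregR hRinf ha, HplusE_coe hmax hregL hregR hRinf ha,
    Rval_coe]

end HfunLemmas
section Tmap
open Function Set Filter Topology Real

lemma theta_mem {s x : ℝ} (hx : x < s) :
    Real.arctan s - Real.arctan x - Real.pi / 2 ∈ Set.Ioo (-(Real.pi / 2)) (Real.pi / 2) := by
  constructor
  · have := Real.arctan_strictMono hx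
    linarith
  · have h1 := Real.arctan_lt_pi_div_two s
    have h2 := Real.neg_pi_div_two_lt_arctan x
    linarith

lemma tmap_lt_s {s a : ℝ} (ha : a < s) : tmap s a < s := by
  have h1 := theta_mem ha
  have h2 : Real.arctan s ∈ Set.Ioo (-(Real.pi / 2)) (Real.pi / 2) :=
    ⟨Real.neg_pi_div_two_lt_arctan s, Real.arctan_lt_pi_div_two s⟩
  have h3 : Real.arctan s - Real.arctan a - Real.pi / 2 < Real.arctan s := by
    have := Real.neg_pi_div_two_lt_arctan a
    linarith
  have := Real.strictMonoOn_tan h1 h2 h3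
  rwa [Real.tan_arctan] at this

lemma tmap_tmap {s a : ℝ} (ha : a < s) : tmap s (tmap s a) = a := by
  have h1 := theta_mem ha
  have h2 : Real.arctan (tmap s a) = Real.arctan s - Real.arctan a - Real.pi / 2 :=
    Real.arctan_tan h1.1 h1.2
  rw [tmap, h2]
  have h3 : Real.arctan s - (Real.arctan s - Real.arctan a - Real.pi / 2) - Real.pi / 2
      = Real.arctan a := by ring
  rw [h3, Real.tan_arctan]

lemma tmap_anti {s x y : ℝ} (hxy : x < y) (hy : y < s) : tmap s y < tmap s x :=
  Real.strictMonoOn_tan (theta_mem hy) (theta_mem (hxy.trans hy))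
    (by have := Real.arctan_strictMono hxy; linarith)

lemma tmap_continuousAt {s b : ℝ} (hb : b < s) : ContinuousAt (tmap s) b := by
  have h1 : ContinuousAt (fun x : ℝ => Real.arctan s - Real.arctan x - Real.pi / 2) b :=
    (continuousAt_const.sub Real.continuous_arctan.continuousAt).sub continuousAt_const
  have h2 : ContinuousAt Real.tan (Real.arctan s - Real.arctan b - Real.pi / 2) :=
    Real.continuousAt_tan.2 (ne_of_gt (Real.cos_pos_of_mem_Ioo (theta_mem hb)))
  have h3 := ContinuousAt.comp (f := fun x : ℝ => Real.arctan s - Real.arctan x - Real.pi / 2)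
    (x := b) h2 h1
  exact h3

lemma tmap_tendsto_left {s a : ℝ} (ha : a < s) :
    Filter.Tendsto (tmap s) (𝓝[<] (tmap s a)) (𝓝[>] a) := by
  have hb : tmap s a < s := tmap_lt_s ha
  rw [tendsto_nhdsWithin_iff]
  constructor
  · have := (tmap_continuousAt hb).tendsto
    rw [tmap_tmap ha] at this
    exact this.mono_left nhdsWithin_le_nhds
  · filter_upwards [self_mem_nhdsWithin] with z hz
    have := tmap_anti hz hb
    rw [tmap_tmap ha] at this
    exact this

lemma tmap_tendsto_right {s a : ℝ} (ha : a < s) :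
    Filter.Tendsto (tmap s) (𝓝[>] (tmap s a)) (𝓝[<] a) := by
  have hb : tmap s a < s := tmap_lt_s ha
  rw [tendsto_nhdsWithin_iff]
  constructor
  · have := (tmap_continuousAt hb).tendsto
    rw [tmap_tmap ha] at this
    exact this.mono_left nhdsWithin_le_nhds
  · filter_upwards [Ioo_mem_nhdsGT hb] with z hz
    have := tmap_anti hz.1 hz.2
    rw [tmap_tmap ha] at this
    exact this

lemma tmap_tendsto_atBot (s : ℝ) : Filter.Tendsto (tmap s) (𝓝[<] s) Filter.atBot := by
  have hθ : Filter.Tendsto (fun x : ℝ => Real.arctan s - Real.arctan x - Real.pi / 2) (𝓝[<] s)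
      (𝓝[>] (-(Real.pi / 2))) := by
    rw [tendsto_nhdsWithin_iff]
    constructor
    · have h1 : Filter.Tendsto (fun x : ℝ => Real.arctan s - Real.arctan x - Real.pi / 2)
          (𝓝 s) (𝓝 (Real.arctan s - Real.arctan s - Real.pi / 2)) :=
        ((continuousAt_const.sub Real.continuous_arctan.continuousAt).sub continuousAt_const)
      have h2 : Real.arctan s - Real.arctan s - Real.pi / 2 = -(Real.pi / 2) := by ring
      rw [h2] at h1
      exact h1.mono_left nhdsWithin_le_nhds
    · filter_upwards [self_mem_nhdsWithin] with z hz
      exact (theta_mem hz).1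
  exact Real.tendsto_tan_neg_pi_div_two.comp hθ

lemma tE_coe {s z : ℝ} (hz : z ≠ s) : tE s ((z : ℝ) : EReal) = ((tmap s z : ℝ) : EReal) := by
  rw [tE, if_neg (EReal.coe_ne_bot z), if_neg, EReal.toReal_coe]
  exact_mod_cast hz

lemma tE_s (s : ℝ) : tE s ((s : ℝ) : EReal) = ⊥ := by
  rw [tE, if_neg (EReal.coe_ne_bot s), if_pos rfl]

end Tmap

/-- Lemma 3.9:  for `a ∈ (-∞, s)` and `b = 𝔱(a) ∈ (-∞, s)` we have
`B'(b) - B'₋(b) ≤ 0` and `B'₊(b) - B'(b) ≥ 0`; in particular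
`B'(b) = min {B'(b), B'₋(b), B'₊(b)}`.  Moreover for `b = s = 𝔱(-∞)`,
`B'(s) - B'₋(s) ≤ 0`. -/
theorem Bprime_is_min (R f um up : ℝ → ℝ) (h : IsUseful R f um up)
    (hmax : MaxEqSelf R) (s Rinf : ℝ) (hRinf : ∀ z : ℝ, z < s → R z ≤ Rinf) :
    (∀ a : ℝ, a < s →
      Bprime R Rinf s (tmap s a) - Function.leftLim (Bprime R Rinf s) (tmap s a) ≤ 0 ∧
      0 ≤ Function.rightLim (Bprime R Rinf s) (tmap s a) - Bprime R Rinf s (tmap s a) ∧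
      Bprime R Rinf s (tmap s a) =
        min (Bprime R Rinf s (tmap s a))
          (min (Function.leftLim (Bprime R Rinf s) (tmap s a))
            (Function.rightLim (Bprime R Rinf s) (tmap s a)))) ∧
    Bprime R Rinf s s - Function.leftLim (Bprime R Rinf s) s ≤ 0 := by
  have hregL : ∀ a : ℝ, Filter.Tendsto R (𝓝[<] a) (𝓝 (Function.leftLim R a)) :=
    h.tendsto_leftLim
  have hregR : ∀ a : ℝ, Filter.Tendsto R (𝓝[>] a) (𝓝 (Function.rightLim R a)) :=
    h.tendsto_rightLim
  constructor
  · intro a ha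
    have hbs : tmap s a < s := tmap_lt_s ha
    have htb : tmap s (tmap s a) = a := tmap_tmap ha
    have hval : Bprime R Rinf s (tmap s a) = Sf R s a + Tf R s a - R a := by
      rw [Bprime, tE_coe (ne_of_lt hbs), htb, RtildeE_coe hmax hregL hregR hRinf ha]
    have hleft : Function.leftLim (Bprime R Rinf s) (tmap s a) =
        Tf R s a + Tf R s a - Function.rightLim R a := by
      apply leftLim_eq_of_tendsto
      have hcomp : Filter.Tendsto
          (fun z => Sf R s (tmap s z) + Tf R s (tmap s z) - R (tmap s z)) (𝓝[<] (tmap s a))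
          (𝓝 (Tf R s a + Tf R s a - Function.rightLim R a)) :=
        (((tendsto_Sf_right hRinf ha).add (tendsto_Tf_right hRinf ha)).sub (hregR a)).comp
          (tmap_tendsto_left ha)
      apply Filter.Tendsto.congr' _ hcomp
      have hev : ∀ᶠ z in 𝓝[<] (tmap s a), tmap s z ∈ Set.Ioo a s :=
        (tmap_tendsto_left ha) (Ioo_mem_nhdsGT ha)
      filter_upwards [hev, self_mem_nhdsWithin] with z hz1 hz2
      have hzs : z ≠ s := ne_of_lt (lt_trans hz2 hbs)
      rw [Bprime, tE_coe hzs, RtildeE_coe hmax hregL hregR hRinf hz1.2]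
    have hright : Function.rightLim (Bprime R Rinf s) (tmap s a) =
        max (Sf R s a) (Function.leftLim R a) + max (Sf R s a) (Function.leftLim R a)
          - Function.leftLim R a := by
      apply rightLim_eq_of_tendsto
      have hcomp : Filter.Tendsto
          (fun z => Sf R s (tmap s z) + Tf R s (tmap s z) - R (tmap s z)) (𝓝[>] (tmap s a))
          (𝓝 (max (Sf R s a) (Function.leftLim R a) + max (Sf R s a) (Function.leftLim R a)
            - Function.leftLim R a)) :=
        (((tendsto_Sf_left hRinf (hregL a) ha).add (tendsto_Tf_left hRinf (hregL a) ha)).sub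
          (hregL a)).comp (tmap_tendsto_right ha)
      apply Filter.Tendsto.congr' _ hcomp
      filter_upwards [Ioo_mem_nhdsGT hbs] with z hz
      rw [Bprime, tE_coe (ne_of_lt hz.2), RtildeE_coe hmax hregL hregR hRinf (tmap_lt_s hz.2)]
    have hTS : Tf R s a ≤ Sf R s a := Tf_le_Sf hRinf ha
    have hSmax : Sf R s a ≤ max (R a) (Tf R s a) := Sf_le_max hRinf ha
    have hRp : Function.rightLim R a ≤ R a := (hmax a).2
    have hRm : Function.leftLim R a ≤ R a := (hmax a).1
    have hRpT : Function.rightLim R a ≤ Tf R s a := by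
      apply le_of_tendsto (hregR a)
      filter_upwards [Ioo_mem_nhdsGT ha] with w hw
      exact mem_le_Tf hRinf hw
    have hle1 : Bprime R Rinf s (tmap s a) ≤ Function.leftLim (Bprime R Rinf s) (tmap s a) := by
      rw [hval, hleft]
      rcases le_total (R a) (Tf R s a) with hc | hc
      · have := hSmax.trans (le_of_eq (max_eq_right hc))
        linarith
      · have := hSmax.trans (le_of_eq (max_eq_left hc))
        linarith
    have hle2 : Bprime R Rinf s (tmap s a) ≤ Function.rightLim (Bprime R Rinf s) (tmap s a) := by
      rw [hval, hright]
      have h1 : Sf R s a ≤ max (Sf R s a) (Function.leftLim R a) := le_max_left _ _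
      linarith
    exact ⟨by linarith, by linarith, (min_eq_left (le_min hle1 hle2)).symm⟩
  · obtain ⟨r, hr⟩ := h.tendsto_atBot
    have hSb : Filter.Tendsto (Sf R s) Filter.atBot
        (𝓝 (max (Function.leftLim R s) (sSup (R '' Set.Iio s)))) := tendsto_Sf_atBot hRinf trivial
    have hTb : Filter.Tendsto (Tf R s) Filter.atBot
        (𝓝 (max (Function.leftLim R s) (sSup (R '' Set.Iio s)))) := tendsto_Tf_atBot hRinf
    set C : ℝ := max (Function.leftLim R s) (sSup (R '' Set.Iio s)) with hC
    have hHb : Filter.Tendsto (fun w : ℝ => Hfun R Rinf s ((w : ℝ) : EReal)) Filter.atBot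
        (𝓝 C) := by
      apply Filter.Tendsto.congr' _ hSb
      filter_upwards [Filter.eventually_lt_atBot s] with w hw
      exact (Hfun_eq_Sf hmax hregL hregR hRinf hw).symm
    have hHplus : HplusE R Rinf s ⊥ = C := by
      rw [HplusE, if_pos rfl]
      exact hHb.limUnder_eq
    have hval : Bprime R Rinf s s = C := by
      rw [Bprime, tE_s, RtildeE, Hfun_bot, hHplus, Rval, if_pos rfl]
      ring
    have hleft : Function.leftLim (Bprime R Rinf s) s = C + C - r := by
      apply leftLim_eq_of_tendsto
      have hcomp : Filter.Tendsto
          (fun z => Sf R s (tmap s z) + Tf R s (tmap s z) - R (tmap s z)) (𝓝[<] s)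
          (𝓝 (C + C - r)) :=
        ((hSb.add hTb).sub hr).comp (tmap_tendsto_atBot s)
      apply Filter.Tendsto.congr' _ hcomp
      filter_upwards [self_mem_nhdsWithin] with z hz
      rw [Bprime, tE_coe (ne_of_lt hz), RtildeE_coe hmax hregL hregR hRinf (tmap_lt_s hz)]
    have hrC : r ≤ C := by
      apply le_of_tendsto_of_tendsto hr hSb
      filter_upwards [Filter.eventually_lt_atBot s] with w hw
      exact mem_le_Sf hRinf ⟨le_rfl, hw⟩
    rw [hval, hleft]
    linarith

end
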